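/- Let G be a graph that is the union of two subgraphs G_1 and G_2 sharing exactly two vertices a and b and the edge ab, with V(G_1) ∩ V(G_2) = {a, b}, and suppose all edges of G belong to exactly one of G_1 or G_2 − ab together with ab ∈ E(G_1). Then P(G) = P(G_1)·P(G_2 − ab), and if P(G_2 − ab) contains a monomial s_2 = η_2·a^0·b^0·∏_{v ∈ V(G_2)∖{a,b}} v^{α_v} with nonzero coefficient, then for any exponent pattern on V(G_1): the monomial s_1 occurs in P(G_1) with nonzero coefficient if and only if s_1·s_2 occurs in P(G) with nonzero coefficient. -/

import Mathlib

open MvPolynomial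

open scoped Classical in
/-- The graph polynomial `∏_{uv ∈ E, u < v} (u - v)` of a graph on `ℕ` whose edges
lie inside the finite vertex set `s`. -/
noncomputable def graphPolyOn (s : Finset ℕ) (G : SimpleGraph ℕ) : MvPolynomial ℕ ℤ :=
  ∏ p ∈ (s ×ˢ s).filter (fun p : ℕ × ℕ => p.1 < p.2 ∧ G.Adj p.1 p.2),
    (X p.1 - X p.2)

open scoped Classical in
lemma graphPolyOn_union (G G1 H : SimpleGraph ℕ) (s1 s2 : Finset ℕ)
    (hG1s : ∀ u v, G1.Adj u v → u ∈ s1 ∧ v ∈ s1)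
    (hHs : ∀ u v, H.Adj u v → u ∈ s2 ∧ v ∈ s2)
    (hdisj : ∀ u v, ¬ (G1.Adj u v ∧ H.Adj u v))
    (hG : ∀ u v, G.Adj u v ↔ G1.Adj u v ∨ H.Adj u v) :
    graphPolyOn (s1 ∪ s2) G = graphPolyOn s1 G1 * graphPolyOn s2 H := by
  unfold graphPolyOn
  rw [← Finset.prod_union]
  · apply Finset.prod_congr _ (fun _ _ => rfl)
    ext p
    simp only [Finset.mem_union, Finset.mem_filter, Finset.mem_product, hG]
    constructor
    · rintro ⟨-, hlt, h1 | h2⟩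
      · exact Or.inl ⟨⟨(hG1s _ _ h1).1, (hG1s _ _ h1).2⟩, hlt, h1⟩
      · exact Or.inr ⟨⟨(hHs _ _ h2).1, (hHs _ _ h2).2⟩, hlt, h2⟩
    · rintro (⟨⟨h1, h2⟩, hlt, h⟩ | ⟨⟨h1, h2⟩, hlt, h⟩)
      · exact ⟨⟨Or.inl h1, Or.inl h2⟩, hlt, Or.inl h⟩
      · exact ⟨⟨Or.inr h1, Or.inr h2⟩, hlt, Or.inr h⟩
  · rw [Finset.disjoint_left]
    rintro p hp1 hp2
    simp only [Finset.mem_filter] at hp1 hp2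
    exact hdisj p.1 p.2 ⟨hp1.2.2, hp2.2.2⟩

open scoped Classical in
lemma graphPolyOn_hom (s : Finset ℕ) (K : SimpleGraph ℕ) :
    ∃ n, (graphPolyOn s K).IsHomogeneous n := by
  refine ⟨((s ×ˢ s).filter (fun p : ℕ × ℕ => p.1 < p.2 ∧ K.Adj p.1 p.2)).card, ?_⟩
  unfold graphPolyOn
  have := IsHomogeneous.prod ((s ×ˢ s).filter (fun p : ℕ × ℕ => p.1 < p.2 ∧ K.Adj p.1 p.2))
    (fun p : ℕ × ℕ => (X p.1 - X p.2 : MvPolynomial ℕ ℤ)) (fun _ => 1)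
    (fun p _ => (isHomogeneous_X _ _).sub (isHomogeneous_X _ _))
  simpa using this

open scoped Classical in
lemma graphPolyOn_vars (s : Finset ℕ) (K : SimpleGraph ℕ) {f : ℕ →₀ ℕ}
    (hf : coeff f (graphPolyOn s K) ≠ 0) : ∀ v, f v ≠ 0 → v ∈ s := by
  intro v hv
  have hvmem : v ∈ (graphPolyOn s K).vars :=
    (mem_vars v).2 ⟨f, mem_support_iff.mpr hf, Finsupp.mem_support_iff.mpr hv⟩
  unfold graphPolyOn at hvmem
  have h2 := vars_prod (fun p : ℕ × ℕ => (X p.1 - X p.2 : MvPolynomial ℕ ℤ)) hvmem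
  simp only [Finset.mem_biUnion, Finset.mem_filter, Finset.mem_product] at h2
  obtain ⟨p, ⟨⟨hp1, hp2⟩, -⟩, hvp⟩ := h2
  have := vars_sub_subset (p := (X p.1 : MvPolynomial ℕ ℤ)) (q := X p.2) hvp
  rw [vars_X, vars_X] at this
  rcases Finset.mem_union.1 this with h | h
  · rwa [Finset.mem_singleton.1 h]
  · rwa [Finset.mem_singleton.1 h]

lemma degree_eq_of_coeff_ne {P : MvPolynomial ℕ ℤ} {n : ℕ} (hP : P.IsHomogeneous n)
    {d : ℕ →₀ ℕ} (hd : coeff d P ≠ 0) : d.degree = n := by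
  rw [Finsupp.degree_eq_weight_one]
  exact hP hd


set_option maxHeartbeats 1600000 in
/-- `G` is the union of `G₁` (with vertex set `s₁`, containing the edge `ab`) and
`H = G₂ − ab` (with vertex set `s₂`), where `s₁ ∩ s₂ = {a, b}` and every edge of `G`
lies in exactly one of `G₁`, `H`.  Then `P(G) = P(G₁)·P(G₂ − ab)`, and if
`P(G₂ − ab)` contains a monomial `s₂ = η₂·a^0·b^0·∏_{v∉{a,b}} v^{α_v}` with nonzero
coefficient, then for every exponent pattern `d₁` on the vertices of `G₁`, the
monomial `d₁` occurs in `P(G₁)` iff the monomial `d₁·d₂` occurs in `P(G)`. -/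
theorem stmt_14 (G G1 H : SimpleGraph ℕ) (s1 s2 : Finset ℕ) (a b : ℕ)
    (hab : a ≠ b) (hmem : a ∈ s1 ∧ b ∈ s1 ∧ a ∈ s2 ∧ b ∈ s2)
    (hinter : s1 ∩ s2 = {a, b})
    (hG1s : ∀ u v, G1.Adj u v → u ∈ s1 ∧ v ∈ s1)
    (hHs : ∀ u v, H.Adj u v → u ∈ s2 ∧ v ∈ s2)
    (hG1ab : G1.Adj a b) (hHab : ¬ H.Adj a b)
    (hdisj : ∀ u v, ¬ (G1.Adj u v ∧ H.Adj u v))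
    (hG : ∀ u v, G.Adj u v ↔ G1.Adj u v ∨ H.Adj u v)
    (d2 : ℕ →₀ ℕ) (hd2a : d2 a = 0) (hd2b : d2 b = 0)
    (hd2supp : ∀ v, d2 v ≠ 0 → v ∈ s2)
    (hd2 : coeff d2 (graphPolyOn s2 H) ≠ 0) :
    graphPolyOn (s1 ∪ s2) G = graphPolyOn s1 G1 * graphPolyOn s2 H ∧
    ∀ d1 : ℕ →₀ ℕ, (∀ v, d1 v ≠ 0 → v ∈ s1) →
      (coeff d1 (graphPolyOn s1 G1) ≠ 0 ↔
        coeff (d1 + d2) (graphPolyOn (s1 ∪ s2) G) ≠ 0) := by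
  obtain ⟨ha1, hb1, ha2, hb2⟩ := hmem
  have key := graphPolyOn_union G G1 H s1 s2 hG1s hHs hdisj hG
  refine ⟨key, fun d1 hd1 => ?_⟩
  obtain ⟨n2, hhom2⟩ := graphPolyOn_hom s2 H
  have hd2deg : d2.degree = n2 := degree_eq_of_coeff_ne hhom2 hd2
  have hmul : coeff (d1 + d2) (graphPolyOn s1 G1 * graphPolyOn s2 H)
      = coeff d1 (graphPolyOn s1 G1) * coeff d2 (graphPolyOn s2 H) := by
    rw [coeff_mul]
    refine Finset.sum_eq_single_of_mem (d1, d2) (Finset.HasAntidiagonal.mem_antidiagonal.mpr rfl) ?_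
    rintro ⟨e, f⟩ hef hne
    rw [Finset.HasAntidiagonal.mem_antidiagonal] at hef
    by_contra hprod
    have he : coeff e (graphPolyOn s1 G1) ≠ 0 := fun h => hprod (by simp [h])
    have hf : coeff f (graphPolyOn s2 H) ≠ 0 := fun h => hprod (by simp [h])
    have hes := graphPolyOn_vars s1 G1 he
    have hfs := graphPolyOn_vars s2 H hf
    have hsum : ∀ v, e v + f v = d1 v + d2 v := fun v => by
      have := DFunLike.congr_fun hef v
      simpa using this
    have hfd2 : ∀ v, v ≠ a → v ≠ b → f v = d2 v := by
      intro v hva hvb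
      by_cases hv2 : v ∈ s2
      · have hv1 : v ∉ s1 := by
          intro hv1
          have hm : v ∈ s1 ∩ s2 := Finset.mem_inter.2 ⟨hv1, hv2⟩
          rw [hinter] at hm
          simp only [Finset.mem_insert, Finset.mem_singleton] at hm
          tauto
        have he0 : e v = 0 := by by_contra h; exact hv1 (hes v h)
        have hd10 : d1 v = 0 := by by_contra h; exact hv1 (hd1 v h)
        have := hsum v
        omega
      · have hf0 : f v = 0 := by by_contra h; exact hv2 (hfs v h)
        have hd20 : d2 v = 0 := by by_contra h; exact hv2 (hd2supp v h)
        rw [hf0, hd20]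
    have hfdeg : f.degree = n2 := degree_eq_of_coeff_ne hhom2 hf
    set T : Finset ℕ := f.support ∪ d2.support ∪ {a, b} with hT
    have haT : a ∈ T := by simp [hT]
    have hbT : b ∈ (T.erase a) := by
      simp [hT, Finset.mem_erase, Ne.symm hab]
    have hsumf : ∑ v ∈ T, f v = f.degree := by
      rw [Finsupp.degree]
      exact (Finset.sum_subset (Finset.subset_union_left.trans Finset.subset_union_left)
        (fun v _ hv => Finsupp.notMem_support_iff.1 hv)).symm
    have hsumd2 : ∑ v ∈ T, d2 v = d2.degree := by
      rw [Finsupp.degree]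
      exact (Finset.sum_subset (Finset.subset_union_right.trans Finset.subset_union_left)
        (fun v _ hv => Finsupp.notMem_support_iff.1 hv)).symm
    have hsplitf : ∑ v ∈ T, f v = f a + (f b + ∑ v ∈ (T.erase a).erase b, f v) := by
      rw [Finset.add_sum_erase _ f hbT, Finset.add_sum_erase _ f haT]
    have hsplitd2 : ∑ v ∈ T, d2 v = d2 a + (d2 b + ∑ v ∈ (T.erase a).erase b, d2 v) := by
      rw [Finset.add_sum_erase _ d2 hbT, Finset.add_sum_erase _ d2 haT]
    have hrest : ∑ v ∈ (T.erase a).erase b, f v = ∑ v ∈ (T.erase a).erase b, d2 v := by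
      apply Finset.sum_congr rfl
      intro v hv
      simp only [Finset.mem_erase] at hv
      exact hfd2 v hv.2.1 hv.1
    have hfab : f a = 0 ∧ f b = 0 := by
      have h1 : ∑ v ∈ T, f v = ∑ v ∈ T, d2 v := by rw [hsumf, hsumd2, hfdeg, hd2deg]
      rw [hsplitf, hsplitd2, hrest, hd2a, hd2b] at h1
      omega
    have hfeq : f = d2 := by
      ext v
      by_cases hva : v = a
      · rw [hva, hfab.1, hd2a]
      by_cases hvb : v = b
      · rw [hvb, hfab.2, hd2b]
      exact hfd2 v hva hvb
    have heeq : e = d1 := by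
      ext v
      have h1 := hsum v
      have hfv : f v = d2 v := by rw [hfeq]
      omega
    exact hne (Prod.ext heeq hfeq)
  rw [key, hmul]
  constructor
  · intro h
    exact mul_ne_zero h hd2
  · intro h h1
    rw [h1, zero_mul] at h
    exact h rfl
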